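/- Let H be a finite connected simple graph with at least 4 vertices containing vertices a, b, c such that N(a) = {b} and N(b) = {a, c}. Then B = {a, b, c} is a biclique of H, the bicliques of the graph H − {a} are exactly the bicliques of H other than B, and KB(H − {a}) is isomorphic to KB(H) − {q}, where q is the vertex of KB(H) corresponding to the biclique B. -/

import Mathlib

open SimpleGraph

variable {V : Type}

/-- `B1`, `B2` are the two (nonempty) parts of an induced complete bipartite subgraph:
they are disjoint, each part is independent, and all edges between the parts are present. -/
def IsCBP (H : SimpleGraph V) (B1 B2 : Set V) : Prop :=
  B1.Nonempty ∧ B2.Nonempty ∧ Disjoint B1 B2 ∧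
    (∀ a ∈ B1, ∀ b ∈ B1, ¬H.Adj a b) ∧
    (∀ a ∈ B2, ∀ b ∈ B2, ¬H.Adj a b) ∧
    (∀ a ∈ B1, ∀ b ∈ B2, H.Adj a b)

/-- A set of vertices inducing a complete bipartite subgraph `K_{m,n}`, `m, n ≥ 1`. -/
def IsCompleteBipartiteSet (H : SimpleGraph V) (S : Set V) : Prop :=
  ∃ B1 B2 : Set V, IsCBP H B1 B2 ∧ B1 ∪ B2 = S

/-- A biclique: a maximal set of vertices inducing a complete bipartite subgraph. -/
def IsBiclique (H : SimpleGraph V) (S : Set V) : Prop :=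
  IsCompleteBipartiteSet H S ∧
    ∀ T : Set V, IsCompleteBipartiteSet H T → S ⊆ T → S = T

/-- The biclique graph `KB(H)`: the intersection graph of the bicliques of `H`. -/
def KB (H : SimpleGraph V) : SimpleGraph {S : Set V // IsBiclique H S} :=
  SimpleGraph.fromRel fun A B => (A.1 ∩ B.1).Nonempty

lemma IsCBP.symm' {H : SimpleGraph V} {B1 B2 : Set V} (h : IsCBP H B1 B2) : IsCBP H B2 B1 := by
  obtain ⟨h1, h2, hd, hi1, hi2, he⟩ := h
  exact ⟨h2, h1, hd.symm, hi2, hi1, fun x hx y hy => (he y hy x hx).symm⟩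

/-- Any CBP containing `a` is inside `{a,b,c}`. -/
lemma cbp_sub {H : SimpleGraph V} {a b c : V}
    (hNa' : ∀ x, H.Adj a x ↔ x = b) (hNb' : ∀ x, H.Adj b x ↔ x = a ∨ x = c)
    {T1 T2 : Set V} (h : IsCBP H T1 T2) (ha : a ∈ T1 ∪ T2) :
    T1 ∪ T2 ⊆ ({a, b, c} : Set V) := by
  suffices key : ∀ T1 T2 : Set V, IsCBP H T1 T2 → a ∈ T1 → T1 ∪ T2 ⊆ ({a, b, c} : Set V) by
    rcases ha with h1 | h2
    · exact key T1 T2 h h1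
    · rw [Set.union_comm]; exact key T2 T1 h.symm' h2
  intro T1 T2 h ha
  obtain ⟨_, hn2, _, _, _, he⟩ := h
  have hT2 : T2 ⊆ {b} := fun y hy => by
    have := (hNa' y).mp (he a ha y hy); simp [this]
  have hbT2 : b ∈ T2 := by
    obtain ⟨y, hy⟩ := hn2
    have := hT2 hy; simp at this; subst this; exact hy
  have hT1 : T1 ⊆ {a, c} := fun x hx => by
    have := (hNb' x).mp (he x hx b hbT2).symm
    rcases this with h | h <;> simp [h]
  intro x hx
  rcases hx with hx | hx
  · rcases hT1 hx with h | h <;> simp_all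
  · have := hT2 hx; simp at this; simp [this]

/-- Find a neighbor of `c` outside `{a, b}` from a walk ending at `c` starting outside. -/
lemma walk_neighbor {H : SimpleGraph V} {a b c : V}
    (hNa' : ∀ x, H.Adj a x ↔ x = b) (hNb' : ∀ x, H.Adj b x ↔ x = a ∨ x = c) :
    ∀ {x y : V}, H.Walk x y → y = c → x ≠ a → x ≠ b → x ≠ c →
      ∃ d, H.Adj c d ∧ d ≠ a ∧ d ≠ b := by
  intro x y w
  induction w with
  | nil => intro h _ _ hc; exact absurd h hc
  | @cons u v w' huv p ih =>
    intro hyc hxa hxb hxc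
    by_cases hva : v = a
    · have h1 : H.Adj a u := hva ▸ huv.symm
      exact absurd ((hNa' u).mp h1) hxb
    by_cases hvb : v = b
    · have h1 : H.Adj b u := hvb ▸ huv.symm
      rcases (hNb' u).mp h1 with h | h
      · exact absurd h hxa
      · exact absurd h hxc
    by_cases hvc : v = c
    · exact ⟨u, hvc ▸ huv.symm, hxa, hxb⟩
    · exact ih hyc hva hvb hvc

/-- If `N(a) = {b}` and `N(b) = {a, c}`, then `B = {a, b, c}` is a biclique, the bicliques
of `H - {a}` are exactly the bicliques of `H` other than `B`, and
`KB(H - {a}) ≅ KB(H) - {q}` where `q` corresponds to `B`. -/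
theorem stmt_7 {V : Type} [Fintype V] (H : SimpleGraph V) (hconn : H.Connected)
    (hcard : 4 ≤ Fintype.card V) (a b c : V) (hac : a ≠ c)
    (hNa : H.neighborSet a = {b}) (hNb : H.neighborSet b = {a, c}) :
    IsBiclique H {a, b, c} ∧
    (∀ T : Set ({a}ᶜ : Set V),
        IsBiclique (SimpleGraph.induce ({a}ᶜ : Set V) H) T ↔
          IsBiclique H (Subtype.val '' T) ∧ Subtype.val '' T ≠ ({a, b, c} : Set V)) ∧
    Nonempty (KB (SimpleGraph.induce ({a}ᶜ : Set V) H) ≃g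
      SimpleGraph.induce {S : {T : Set V // IsBiclique H T} | S.1 ≠ {a, b, c}} (KB H)) := by
  classical
  have hNa' : ∀ x, H.Adj a x ↔ x = b := fun x => by
    rw [← SimpleGraph.mem_neighborSet, hNa]; rfl
  have hNb' : ∀ x, H.Adj b x ↔ x = a ∨ x = c := fun x => by
    rw [← SimpleGraph.mem_neighborSet, hNb]; simp
  have hab : H.Adj a b := (hNa' b).mpr rfl
  have hbc : H.Adj b c := (hNb' c).mpr (Or.inr rfl)
  have hnab : a ≠ b := hab.ne
  have hnbc : b ≠ c := hbc.ne
  have hnac : ¬ H.Adj a c := fun h => hnbc ((hNa' c).mp h).symm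
  -- existence of a neighbor d of c with d ∉ {a, b}
  obtain ⟨d, hdc, hda, hdb⟩ : ∃ d, H.Adj c d ∧ d ≠ a ∧ d ≠ b := by
    obtain ⟨d0, hd0⟩ : ∃ d0, d0 ∉ ({a, b, c} : Finset V) := by
      by_contra hco
      push_neg at hco
      have hsub : (Finset.univ : Finset V) ⊆ {a, b, c} := fun x _ => hco x
      have h1 := Finset.card_le_card hsub
      have h2 : ({a, b, c} : Finset V).card ≤ 3 := by
        exact Finset.card_le_three
      rw [Finset.card_univ] at h1
      omega
    simp [Finset.mem_insert] at hd0
    obtain ⟨ha0, hb0, hc0⟩ := hd0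
    obtain ⟨w⟩ := hconn.preconnected d0 c
    exact walk_neighbor hNa' hNb' w rfl ha0 hb0 hc0
  have hdcne : d ≠ c := hdc.ne'
  -- Part 1: {a,b,c} is a biclique
  have hcbp_abc : IsCBP H ({b} : Set V) ({a, c} : Set V) := by
    refine ⟨⟨b, rfl⟩, ⟨a, Set.mem_insert _ _⟩, ?_, ?_, ?_, ?_⟩
    · simp only [Set.disjoint_singleton_left, Set.mem_insert_iff, Set.mem_singleton_iff]
      push_neg
      exact ⟨hnab.symm, hnbc⟩
    · intro x hx y hy; simp only [Set.mem_singleton_iff] at hx hy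
      rw [hx, hy]; exact H.loopless.irrefl b
    · intro x hx y hy
      simp only [Set.mem_insert_iff, Set.mem_singleton_iff] at hx hy
      rcases hx with h | h <;> rcases hy with h' | h' <;> rw [h, h']
      · exact H.loopless.irrefl a
      · exact hnac
      · exact fun hh => hnac hh.symm
      · exact H.loopless.irrefl c
    · intro x hx y hy
      simp only [Set.mem_singleton_iff] at hx
      simp only [Set.mem_insert_iff, Set.mem_singleton_iff] at hy
      rw [hx]
      rcases hy with h' | h' <;> rw [h']
      · exact hab.symm
      · exact hbc
  have hcbs_abc : IsCompleteBipartiteSet H ({a, b, c} : Set V) := by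
    refine ⟨{b}, {a, c}, hcbp_abc, ?_⟩
    ext x; simp; tauto
  have hbic_abc : IsBiclique H ({a, b, c} : Set V) := by
    refine ⟨hcbs_abc, ?_⟩
    intro T hT hsub
    obtain ⟨T1, T2, hcbp, hu⟩ := hT
    have haT : a ∈ T1 ∪ T2 := by rw [hu]; exact hsub (by simp)
    have := cbp_sub hNa' hNb' hcbp haT
    rw [hu] at this
    exact Set.Subset.antisymm hsub this
  refine ⟨hbic_abc, ?_⟩
  -- setup for induced graph
  set s : Set V := ({a}ᶜ : Set V) with hs
  set G := SimpleGraph.induce s H with hG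
  have hGadj : ∀ x y : s, G.Adj x y ↔ H.Adj x.1 y.1 := fun x y => Iff.rfl
  have hinj : Function.Injective (Subtype.val : s → V) := Subtype.coe_injective
  have hmem_s : ∀ x : V, x ∈ s ↔ x ≠ a := fun x => by simp [hs]
  -- transfer lemmas
  have L_img : ∀ T1 T2 : Set s, IsCBP G T1 T2 →
      IsCBP H (Subtype.val '' T1) (Subtype.val '' T2) := by
    intro T1 T2 ⟨h1, h2, hd, hi1, hi2, he⟩
    refine ⟨h1.image _, h2.image _, Set.disjoint_image_of_injective hinj hd, ?_, ?_, ?_⟩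
    · rintro x ⟨x', hx', rfl⟩ y ⟨y', hy', rfl⟩; exact hi1 x' hx' y' hy'
    · rintro x ⟨x', hx', rfl⟩ y ⟨y', hy', rfl⟩; exact hi2 x' hx' y' hy'
    · rintro x ⟨x', hx', rfl⟩ y ⟨y', hy', rfl⟩; exact he x' hx' y' hy'
  have L_pre : ∀ S1 S2 : Set V, IsCBP H S1 S2 → S1 ⊆ s → S2 ⊆ s →
      IsCBP G (Subtype.val ⁻¹' S1) (Subtype.val ⁻¹' S2) := by
    intro S1 S2 ⟨h1, h2, hd, hi1, hi2, he⟩ hs1 hs2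
    refine ⟨?_, ?_, ?_, ?_, ?_, ?_⟩
    · obtain ⟨x, hx⟩ := h1; exact ⟨⟨x, hs1 hx⟩, hx⟩
    · obtain ⟨x, hx⟩ := h2; exact ⟨⟨x, hs2 hx⟩, hx⟩
    · rw [Set.disjoint_left]; intro x hx hx'; exact hd.le_bot ⟨hx, hx'⟩
    · intro x hx y hy; exact hi1 x.1 hx y.1 hy
    · intro x hx y hy; exact hi2 x.1 hx y.1 hy
    · intro x hx y hy; exact he x.1 hx y.1 hy
  have himg_sub : ∀ T : Set s, (Subtype.val '' T : Set V) ⊆ s := by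
    rintro T x ⟨x', _, rfl⟩; exact x'.2
  have L_cbs : ∀ T : Set s, IsCompleteBipartiteSet G T ↔
      IsCompleteBipartiteSet H (Subtype.val '' T) := by
    intro T
    constructor
    · rintro ⟨T1, T2, h, hu⟩
      exact ⟨_, _, L_img T1 T2 h, by rw [← Set.image_union, hu]⟩
    · rintro ⟨S1, S2, h, hu⟩
      have hs1 : S1 ⊆ s := fun x hx => himg_sub T (hu ▸ Set.mem_union_left _ hx)
      have hs2 : S2 ⊆ s := fun x hx => himg_sub T (hu ▸ Set.mem_union_right _ hx)
      refine ⟨_, _, L_pre S1 S2 h hs1 hs2, ?_⟩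
      rw [← Set.preimage_union, hu, Set.preimage_image_eq T hinj]
  -- Part 2: the biclique correspondence
  have L_bic : ∀ T : Set s, IsBiclique G T ↔
      IsBiclique H (Subtype.val '' T) ∧ Subtype.val '' T ≠ ({a, b, c} : Set V) := by
    intro T
    constructor
    · rintro ⟨hcbs, hmax⟩
      have hane : a ∉ (Subtype.val '' T : Set V) := fun h => (hmem_s a).mp (himg_sub T h) rfl
      refine ⟨⟨(L_cbs T).mp hcbs, ?_⟩, fun h => hane (h ▸ by simp)⟩
      intro T' hT' hsub
      by_cases haT' : a ∈ T'
      · -- T' ⊆ {a,b,c}, leads to T = {b, c} which is not maximal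
        exfalso
        obtain ⟨T1, T2, hcbp, hu⟩ := hT'
        have hsub' : T' ⊆ ({a, b, c} : Set V) := hu ▸ cbp_sub hNa' hNb' hcbp (hu ▸ haT')
        have hTbc : (Subtype.val '' T : Set V) ⊆ {b, c} := by
          intro x hx
          rcases hsub' (hsub hx) with h | h
          · exact absurd (h ▸ hx) hane
          · exact h
        -- T as a set in G: show {b,c} ⊆ val '' T (since val '' T is CBP it has two points... )
        -- Use maximality of T in G against {b', c', d'}
        have hbs : b ∈ s := (hmem_s b).mpr hnab.symm
        have hcs : c ∈ s := (hmem_s c).mpr (Ne.symm hac)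
        have hds : d ∈ s := (hmem_s d).mpr hda
        -- val '' T has at least two elements (from CBP parts)
        obtain ⟨T1', T2', hcbp', hu'⟩ := hcbs
        obtain ⟨x1, hx1⟩ := hcbp'.1
        obtain ⟨x2, hx2⟩ := hcbp'.2.1
        have hx12 : x1 ≠ x2 := fun h => (hcbp'.2.2.1.le_bot ⟨hx1, h ▸ hx2⟩)
        have hx1T : x1 ∈ T := hu' ▸ Set.mem_union_left _ hx1
        have hx2T : x2 ∈ T := hu' ▸ Set.mem_union_right _ hx2
        have hval : ∀ x ∈ T, x.1 = b ∨ x.1 = c := fun x hx => by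
          have := hTbc ⟨x, hx, rfl⟩; simpa using this
        have hbcT : (⟨b, hbs⟩ : s) ∈ T ∧ (⟨c, hcs⟩ : s) ∈ T := by
          rcases hval x1 hx1T with h1 | h1 <;> rcases hval x2 hx2T with h2 | h2
          · exact absurd (hinj (h1.trans h2.symm)) hx12
          · constructor
            · have : x1 = ⟨b, hbs⟩ := Subtype.ext h1; exact this ▸ hx1T
            · have : x2 = ⟨c, hcs⟩ := Subtype.ext h2; exact this ▸ hx2T
          · constructor
            · have : x2 = ⟨b, hbs⟩ := Subtype.ext h2; exact this ▸ hx2T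
            · have : x1 = ⟨c, hcs⟩ := Subtype.ext h1; exact this ▸ hx1T
          · exact absurd (hinj (h1.trans h2.symm)) hx12
        -- now build the bigger CBP {b', d'} ∪ {c'}
        have hTsub : T ⊆ ({⟨b, hbs⟩, ⟨c, hcs⟩} : Set s) := by
          intro x hx
          rcases hval x hx with h | h
          · left; exact Subtype.ext h
          · right; exact Subtype.ext h
        have hcbp2 : IsCBP G ({⟨c, hcs⟩} : Set s) ({⟨b, hbs⟩, ⟨d, hds⟩} : Set s) := by
          have hnbd : ¬ H.Adj b d := fun hcon => by
            rcases (hNb' d).mp hcon with h | h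
            · exact hda h
            · exact hdcne h
          refine ⟨⟨⟨c, hcs⟩, rfl⟩, ⟨⟨b, hbs⟩, Set.mem_insert _ _⟩, ?_, ?_, ?_, ?_⟩
          · simp only [Set.disjoint_singleton_left, Set.mem_insert_iff, Set.mem_singleton_iff]
            push_neg
            constructor
            · intro hh; exact hnbc (congrArg Subtype.val hh).symm
            · intro hh; exact hdcne (congrArg Subtype.val hh).symm
          · intro x hx y hy; simp only [Set.mem_singleton_iff] at hx hy
            rw [hx, hy]; exact G.loopless.irrefl _
          · intro x hx y hy
            simp only [Set.mem_insert_iff, Set.mem_singleton_iff] at hx hy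
            rcases hx with h | h <;> rcases hy with h' | h' <;> rw [h, h']
            · exact G.loopless.irrefl _
            · exact fun hcon => hnbd ((hGadj _ _).mp hcon)
            · exact fun hcon => hnbd ((hGadj _ _).mp hcon).symm
            · exact G.loopless.irrefl _
          · intro x hx y hy
            simp only [Set.mem_singleton_iff] at hx
            simp only [Set.mem_insert_iff, Set.mem_singleton_iff] at hy
            rw [hx]
            rcases hy with h' | h' <;> rw [h']
            · exact (hGadj _ _).mpr hbc.symm
            · exact (hGadj _ _).mpr hdc
        have hcbs2 : IsCompleteBipartiteSet G ({⟨b, hbs⟩, ⟨c, hcs⟩, ⟨d, hds⟩} : Set s) := by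
          refine ⟨_, _, hcbp2, ?_⟩
          ext x; simp; tauto
        have := hmax _ hcbs2 (fun x hx => by
          simp only [Set.mem_insert_iff, Set.mem_singleton_iff]
          rcases hTsub hx with h | h
          · exact Or.inl h
          · exact Or.inr (Or.inl h))
        have hdT : (⟨d, hds⟩ : s) ∈ T := this ▸ (by simp : (⟨d, hds⟩ : s) ∈ ({⟨b, hbs⟩, ⟨c, hcs⟩, ⟨d, hds⟩} : Set s))
        rcases hval _ hdT with h | h
        · exact hdb h
        · exact hdcne h
      · -- a ∉ T', transfer to G
        have hT's : T' ⊆ s := fun x hx => (hmem_s x).mpr (fun h => haT' (h ▸ hx))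
        obtain ⟨S1, S2, hcbp, hu⟩ := hT'
        have hcbsG : IsCompleteBipartiteSet G (Subtype.val ⁻¹' T') :=
          ⟨_, _, L_pre S1 S2 hcbp (fun x hx => hT's (hu ▸ Set.mem_union_left _ hx))
            (fun x hx => hT's (hu ▸ Set.mem_union_right _ hx)),
            by rw [← Set.preimage_union, hu]⟩
        have hTsub : T ⊆ Subtype.val ⁻¹' T' := fun x hx => hsub ⟨x, hx, rfl⟩
        have hTeq := hmax _ hcbsG hTsub
        rw [hTeq, Set.image_preimage_eq_of_subset]
        rw [Subtype.range_coe]; exact hT's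
    · rintro ⟨⟨hcbs, hmax⟩, _⟩
      refine ⟨(L_cbs T).mpr hcbs, ?_⟩
      intro T'' hT'' hsub
      have himg : IsCompleteBipartiteSet H (Subtype.val '' T'') := (L_cbs T'').mp hT''
      have := hmax _ himg (Set.image_mono hsub)
      have := Set.image_injective.mpr hinj this
      exact this
  refine ⟨L_bic, ?_⟩
  -- Part 3: the isomorphism
  have not_mem_a : ∀ S : Set V, IsBiclique H S → S ≠ ({a, b, c} : Set V) → a ∉ S := by
    intro S ⟨hcbs, hmax⟩ hne haS
    obtain ⟨S1, S2, hcbp, hu⟩ := hcbs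
    have hsub : S ⊆ ({a, b, c} : Set V) := hu ▸ cbp_sub hNa' hNb' hcbp (hu ▸ haS)
    exact hne (hmax _ hcbs_abc hsub)
  have himg_eq : ∀ (S : Set V), a ∉ S → Subtype.val '' (Subtype.val ⁻¹' S : Set s) = S := by
    intro S haS
    rw [Set.image_preimage_eq_of_subset]
    rw [Subtype.range_coe]
    intro x hx; exact (hmem_s x).mpr (fun h => haS (h ▸ hx))
  refine ⟨?_⟩
  refine ⟨⟨?_, ?_, ?_, ?_⟩, ?_⟩
  · -- toFun
    intro T
    exact ⟨⟨Subtype.val '' T.1, ((L_bic T.1).mp T.2).1⟩, ((L_bic T.1).mp T.2).2⟩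
  · -- invFun
    intro S
    refine ⟨Subtype.val ⁻¹' S.1.1, ?_⟩
    have haS : a ∉ S.1.1 := not_mem_a _ S.1.2 S.2
    rw [L_bic, himg_eq _ haS]
    exact ⟨S.1.2, S.2⟩
  · -- left_inv
    intro T
    apply Subtype.ext
    exact Set.preimage_image_eq T.1 hinj
  · -- right_inv
    intro S
    apply Subtype.ext; apply Subtype.ext
    exact himg_eq _ (not_mem_a _ S.1.2 S.2)
  · -- map_rel_iff'
    intro T T'
    constructor
    · rintro ⟨h1, h2⟩
      refine ⟨?_, ?_⟩
      · intro h; exact h1 (by rw [h])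
      · rcases h2 with h | h
        · left
          have h' : (Subtype.val '' T.1 ∩ Subtype.val '' T'.1).Nonempty := h
          rwa [← Set.image_inter hinj, Set.image_nonempty] at h'
        · right
          have h' : (Subtype.val '' T'.1 ∩ Subtype.val '' T.1).Nonempty := h
          rwa [← Set.image_inter hinj, Set.image_nonempty] at h'
    · rintro ⟨h1, h2⟩
      refine ⟨?_, ?_⟩
      · intro h
        have h3 : (Subtype.val '' T.1 : Set V) = Subtype.val '' T'.1 :=
          congrArg (fun A => A.1) h
        exact h1 (Subtype.ext (Set.image_injective.mpr hinj h3))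
      · rcases h2 with h | h
        · left
          show (Subtype.val '' T.1 ∩ Subtype.val '' T'.1).Nonempty
          rw [← Set.image_inter hinj]
          exact h.image _
        · right
          show (Subtype.val '' T'.1 ∩ Subtype.val '' T.1).Nonempty
          rw [← Set.image_inter hinj]
          exact h.image _
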